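/- There exists a context-free game that has a regular dominant one-pass strategy but no forgetful dominant one-pass strategy. (A witness is the game over Σ={a} with the single rule a→aa and target language {a^k : k ≥ 2}.) -/

import Mathlib

namespace CFG

/-- Juliet's two kinds of moves. -/
inductive JMove : Type
  | call : JMove
  | read : JMove
deriving DecidableEq

/-- The extended alphabet Σ̂: `Sum.inl a` is the plain symbol `a`,
`Sum.inr a` is the "called" copy `â`. -/
abbrev HSym (A : Type) : Type := A ⊕ A

/-- The homomorphism ♮ deleting called symbols. -/
def flat {A : Type} (α : List (HSym A)) : List A :=
  α.filterMap (fun x => match x with | Sum.inl a => some a | Sum.inr _ => none)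

/-- A context-free game: a (minimal) DFA `T` over `A` with finite state set `Q`,
and a replacement relation `R` with nonempty replacement words and regular
replacement languages. -/
structure CFGame (A : Type) where
  Q : Type
  fintypeQ : Fintype Q
  T : DFA A Q
  minimal_reachable : ∀ q : Q, ∃ w : List A, T.evalFrom T.start w = q
  minimal_distinguishable :
    ∀ q q' : Q, (∀ w : List A, T.evalFrom q w ∈ T.accept ↔ T.evalFrom q' w ∈ T.accept) → q = q'
  R : A → List A → Prop
  R_ne : ∀ a v, R a v → v ≠ []
  R_regular : ∀ a, Language.IsRegular {v : List A | R a v}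

variable {A : Type}

/-- `a` is a function symbol (its replacement language is nonempty). -/
def CFGame.Fn (G : CFGame A) (a : A) : Prop := ∃ v, G.R a v

/-- One-pass strategies of Juliet (values at non-function symbols are irrelevant). -/
abbrev JStrat (A : Type) : Type := List (HSym A) → A → JMove

/-- Strategies of Romeo (values at non-function symbols are irrelevant). -/
abbrev RStrat (A : Type) : Type := List (HSym A) → A → List A

/-- Validity of a Romeo strategy: replacement words belong to the replacement language. -/
def CFGame.RValid (G : CFGame A) (τ : RStrat A) : Prop :=
  ∀ (α : List (HSym A)) (a : A), G.Fn a → G.R a (τ α a)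

/-- Configurations, instrumented for depth bookkeeping: a history string, the
remaining string where every symbol is annotated with its call-nesting level,
and the maximal nesting depth of the `Call` moves played so far. -/
abbrev Config (A : Type) : Type := List (HSym A) × List (A × ℕ) × ℕ

/-- One step of a play: Juliet reads or calls the current symbol according to `σ`
(a call is only possible at a function symbol); a call is answered by `τ`. -/
noncomputable def CFGame.step (G : CFGame A) (σ : JStrat A) (τ : RStrat A) :
    Config A → Config A :=
  fun c =>
    match c with
    | (α, [], d) => (α, [], d)
    | (α, (a, k) :: v, d) =>
      letI := Classical.propDecidable (G.Fn a ∧ σ α a = JMove.call)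
      if G.Fn a ∧ σ α a = JMove.call then
        (α ++ [Sum.inr a], (τ α a).map (fun b => (b, k + 1)) ++ v, max d (k + 1))
      else (α ++ [Sum.inl a], v, d)

/-- The play of `σ` against `τ` on input word `w`, as the sequence of its
configurations (the configuration stays fixed once the remaining string is empty). -/
noncomputable def CFGame.play (G : CFGame A) (σ : JStrat A) (τ : RStrat A)
    (w : List A) (n : ℕ) : Config A :=
  (G.step σ τ)^[n] ([], w.map (fun a => (a, 0)), 0)

/-- `σ` wins on `w`: against every (valid) Romeo strategy, the play on `w` is
finite and its final string belongs to the target language. -/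
def CFGame.WinsOn (G : CFGame A) (σ : JStrat A) (w : List A) : Prop :=
  ∀ τ : RStrat A, G.RValid τ →
    ∃ n : ℕ, (G.play σ τ w n).2.1 = [] ∧
      G.T.evalFrom G.T.start (flat (G.play σ τ w n).1) ∈ G.T.accept

/-- The winning set `W(σ)`. -/
def CFGame.W (G : CFGame A) (σ : JStrat A) : Set (List A) := {w | G.WinsOn σ w}

/-- `σ` is terminating: every play of `σ` is finite. -/
def CFGame.Terminating (G : CFGame A) (σ : JStrat A) : Prop :=
  ∀ τ : RStrat A, G.RValid τ → ∀ w : List A, ∃ n : ℕ, (G.play σ τ w n).2.1 = []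

/-- `σ` is dominant: it dominates every one-pass strategy. -/
def CFGame.Dominant (G : CFGame A) (σ : JStrat A) : Prop :=
  ∀ σ' : JStrat A, G.W σ' ⊆ G.W σ

/-- `σ` is undominated: no one-pass strategy strictly dominates it. -/
def CFGame.Undominated (G : CFGame A) (σ : JStrat A) : Prop :=
  ¬ ∃ σ' : JStrat A, G.W σ ⊂ G.W σ'

/-- `σ` is forgetful: its decisions only depend on `♮α` and the current symbol. -/
def CFGame.Forgetful (G : CFGame A) (σ : JStrat A) : Prop :=
  ∀ (α β : List (HSym A)) (a : A), G.Fn a → flat α = flat β → σ α a = σ β a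

/-- `σ` is regular: the language `{αa : σ(α,a) = Call}` over Σ̂ is regular. -/
def CFGame.RegularStrat (G : CFGame A) (σ : JStrat A) : Prop :=
  Language.IsRegular
    {x : List (HSym A) | ∃ (α : List (HSym A)) (a : A),
      G.Fn a ∧ σ α a = JMove.call ∧ x = α ++ [Sum.inl a]}

/-- One step of a strategy automaton of a strongly regular strategy, on the state
set `Q ∪ {Call}` (`none` is the absorbing state `Call`). -/
def optStep {Q : Type} (δA : Q → A → Option Q) (o : Option Q) (a : A) : Option Q :=
  o.bind (fun q => δA q a)

/-- `σ` is strongly regular: given by an automaton obtained from `T` by rerouting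
some transitions to a new accepting state `Call`; Juliet plays `Call` on `(α,a)`
iff the automaton maps `♮α·a` to `Call`. -/
def CFGame.StronglyRegular (G : CFGame A) (σ : JStrat A) : Prop :=
  ∃ δA : G.Q → A → Option G.Q,
    (∀ q a, δA q a = some (G.T.step q a) ∨ δA q a = none) ∧
    ∀ (α : List (HSym A)) (a : A), G.Fn a →
      (σ α a = JMove.call ↔
        List.foldl (optStep δA) (some G.T.start) (flat α ++ [a]) = none)

/-- Shortlex (strict) order on words. -/
def shortLex [LinearOrder A] (v w : List A) : Prop :=
  v.length < w.length ∨ (v.length = w.length ∧ List.Lex (· < ·) v w)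

/-- `V <_sl W` for sets of words: the shortlex-least word of the symmetric
difference belongs to `W`. -/
def slLT [LinearOrder A] (V W : Set (List A)) : Prop :=
  ∃ w : List A, w ∈ W ∧ w ∉ V ∧ ∀ v : List A, shortLex v w → (v ∈ V ↔ v ∈ W)

/-- `V ≤_sl W` for sets of words. -/
def slLE [LinearOrder A] (V W : Set (List A)) : Prop := V = W ∨ slLT V W

/-- `σ` is weakly dominant: `W(σ') ≤_sl W(σ)` for every one-pass strategy `σ'`. -/
def CFGame.WeaklyDominant [LinearOrder A] (G : CFGame A) (σ : JStrat A) : Prop :=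
  ∀ σ' : JStrat A, slLE (G.W σ') (G.W σ)

/-- The bounded depth property. -/
def CFGame.BoundedDepthProperty (G : CFGame A) : Prop :=
  ∃ B : ℕ → ℕ, ∀ σ : JStrat A, ∀ k : ℕ, ∃ σk : JStrat A,
    ∀ w ∈ G.W σ, w.length ≤ k →
      G.WinsOn σk w ∧
      ∀ τ : RStrat A, G.RValid τ → ∀ n : ℕ, (G.play σk τ w n).2.2 ≤ B w.length

/-- Prefix-freeness of all replacement languages. -/
def CFGame.PrefixFree (G : CFGame A) : Prop :=
  ∀ (a : A) (u v : List A), G.R a u → G.R a v → u <+: v → u = v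

/-- Non-recursiveness: no function symbol can be derived from itself. -/
def CFGame.NonRecursive (G : CFGame A) : Prop :=
  ¬ ∃ (n : ℕ) (f : ℕ → A), 1 ≤ n ∧ f 0 = f n ∧ (∀ i ≤ n, G.Fn (f i)) ∧
    ∀ k < n, ∃ v : List A, G.R (f k) v ∧ f (k + 1) ∈ v

/-- `σ` is almost undominated: only finitely many words are lost by `σ` but won
by some strategy dominating `σ`. -/
def CFGame.AlmostUndominated (G : CFGame A) (σ : JStrat A) : Prop :=
  Set.Finite {w : List A | ¬ G.WinsOn σ w ∧
    ∃ σ' : JStrat A, G.W σ ⊆ G.W σ' ∧ G.WinsOn σ' w}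

/-- Convergence of a sequence of one-pass strategies. -/
def Converges (G : CFGame A) (σs : ℕ → JStrat A) (σ : JStrat A) : Prop :=
  ∀ n : ℕ, ∃ k0 : ℕ, ∀ k ≥ k0, ∀ α : List (HSym A), α.length ≤ n →
    ∀ a : A, G.Fn a → σ α a = σs k α a

/-- The one-pass strategy defined by a DFA `M` over Σ̂ (a strategy automaton):
play `Call` on `(α,a)` iff `M` accepts `α·a`. -/
noncomputable def autoStrat {S : Type} (M : DFA (HSym A) S) : JStrat A :=
  fun α a =>
    letI := Classical.propDecidable (M.eval (α ++ [Sum.inl a]) ∈ M.accept)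
    if M.eval (α ++ [Sum.inl a]) ∈ M.accept then JMove.call else JMove.read

/-- `States(q; w, σ)`: the `T`-states `δ*(q, ♮α)` over final history strings `α`
of plays of `σ` on `w`. -/
def CFGame.StatesOf (G : CFGame A) (σ : JStrat A) (q : G.Q) (w : List A) : Set G.Q :=
  {q' | ∃ τ : RStrat A, G.RValid τ ∧ ∃ n : ℕ,
    (G.play σ τ w n).2.1 = [] ∧ G.T.evalFrom q (flat (G.play σ τ w n).1) = q'}

/-- `(p, a, S)` is an effect triple of `σ`. -/
def CFGame.IsEffectTriple (G : CFGame A) (σ : JStrat A) (t : G.Q × A × Set G.Q) : Prop :=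
  G.StatesOf σ t.1 [t.2.1] ⊆ t.2.2

/-- An effect triple is trivial if `δ(p,a) ∈ S`. -/
def CFGame.TrivialTriple (G : CFGame A) (t : G.Q × A × Set G.Q) : Prop :=
  G.T.step t.1 t.2.1 ∈ t.2.2

/-- The substrategy `σ^α`. -/
def subStrat (σ : JStrat A) (α : List (HSym A)) : JStrat A :=
  fun β a => σ (α ++ β) a

/-- The effect set `E(σ)`: all effect triples of all substrategies of `σ`. -/
def CFGame.EffectSet (G : CFGame A) (σ : JStrat A) : Set (G.Q × A × Set G.Q) :=
  {t | ∃ α : List (HSym A), G.IsEffectTriple (subStrat σ α) t}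

/-- The transition relation of the NFA `N_E` associated with a set `E` of effect
triples (state set `P(Q)`, initial state `{s}`, accepting states the subsets of `F`). -/
def CFGame.NEStep (G : CFGame A) (E : Set (G.Q × A × Set G.Q))
    (S : Set G.Q) (a : A) (S' : Set G.Q) : Prop :=
  ∀ p ∈ S, ∃ S'' : Set G.Q, S'' ⊆ S' ∧ (p, a, S'') ∈ E

/-- A strategy for the online word problem `OnlineNFA(N_E)`. -/
def CFGame.NEOnlineStrat (G : CFGame A) (E : Set (G.Q × A × Set G.Q))
    (ρ : List A → Set G.Q) : Prop :=
  ρ [] = {G.T.start} ∧ ∀ (w : List A) (a : A), G.NEStep E (ρ w) a (ρ (w ++ [a]))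

/-- The winning set of a strategy for `OnlineNFA(N_E)`. -/
def CFGame.NEWins (G : CFGame A) (ρ : List A → Set G.Q) : Set (List A) :=
  {w | ρ w ⊆ G.T.accept}

/-- A strategy automaton `M` is `(p,a,St)`-inducing. -/
def CFGame.Inducing (G : CFGame A) {S : Type} (M : DFA (HSym A) S)
    (p : G.Q) (a : A) (St : Set G.Q) : Prop :=
  G.Terminating (autoStrat M) ∧ G.Fn a ∧
  (∀ u : List A, G.R a u → G.StatesOf (autoStrat M) p u ⊆ St) ∧
  ∃ QA : G.Q → Set S,
    (∀ q ∈ St, ∀ q' ∈ St, q ≠ q' → Disjoint (QA q) (QA q')) ∧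
    ∀ u : List A, G.R a u → ∀ τ : RStrat A, G.RValid τ → ∀ n : ℕ,
      (G.play (autoStrat M) τ u n).2.1 = [] →
      ((∀ q ∈ St,
          (M.eval (G.play (autoStrat M) τ u n).1 ∈ QA q ↔
            G.T.evalFrom p (flat (G.play (autoStrat M) τ u n).1) = q)) ∧
        ∀ β : List (HSym A), β <+: (G.play (autoStrat M) τ u n).1 →
          β ≠ (G.play (autoStrat M) τ u n).1 → ∀ r ∈ St, M.eval β ∉ QA r)



section Ex14

/-- The target DFA: counts up to 2. -/
def T14 : DFA Unit (Fin 3) := ⟨fun q _ => ⟨min (q.val + 1) 2, by omega⟩, 0, {2}⟩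

lemma T14_evalFrom (q : Fin 3) (w : List Unit) :
    T14.evalFrom q w = ⟨min (q.val + w.length) 2, by omega⟩ := by
  induction w generalizing q with
  | nil =>
    simp only [DFA.evalFrom, List.foldl_nil, List.length_nil]
    exact Fin.ext (by have := q.isLt; simp; omega)
  | cons a w ih =>
    show T14.evalFrom (T14.step q a) w = _
    rw [ih]
    exact Fin.ext (by simp [T14]; omega)

/-- DFA for the replacement language {aa}. -/
def M14 : DFA Unit (Fin 4) := ⟨fun q _ => ⟨min (q.val + 1) 3, by omega⟩, 0, {2}⟩

lemma M14_evalFrom (q : Fin 4) (w : List Unit) :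
    M14.evalFrom q w = ⟨min (q.val + w.length) 3, by omega⟩ := by
  induction w generalizing q with
  | nil =>
    simp only [DFA.evalFrom, List.foldl_nil, List.length_nil]
    exact Fin.ext (by have := q.isLt; simp; omega)
  | cons a w ih =>
    show M14.evalFrom (M14.step q a) w = _
    rw [ih]
    exact Fin.ext (by simp [M14]; omega)

lemma unit_list_eq (w : List Unit) : w = List.replicate w.length () := by
  induction w with
  | nil => rfl
  | cons a w ih => simpa [List.replicate] using ih

/-- The game over {a} with rule a → aa and target {a^k : k ≥ 2}. -/
def G14 : CFGame Unit where
  Q := Fin 3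
  fintypeQ := inferInstance
  T := T14
  minimal_reachable := by
    intro q
    refine ⟨List.replicate q.val (), ?_⟩
    rw [T14_evalFrom]
    exact Fin.ext (by have := q.isLt; simp [T14]; omega)
  minimal_distinguishable := by
    intro q q' h
    have h' : ∀ n : ℕ, (min (q.val + n) 2 = 2 ↔ min (q'.val + n) 2 = 2) := by
      intro n
      have := h (List.replicate n ())
      rw [T14_evalFrom, T14_evalFrom] at this
      simpa [T14, Fin.ext_iff] using this
    have h0 := h' 0
    have h1 := h' 1
    have := q.isLt
    have := q'.isLt
    exact Fin.ext (by omega)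
  R := fun _ v => v = [(), ()]
  R_ne := by rintro a v rfl; simp
  R_regular := by
    intro a
    refine ⟨Fin 4, inferInstance, M14, ?_⟩
    ext w
    show M14.evalFrom M14.start w ∈ M14.accept ↔ _
    rw [M14_evalFrom]
    constructor
    · intro hw
      have hlen : w.length = 2 := by
        have : min (0 + w.length) 3 = 2 := by simpa [M14, Fin.ext_iff] using hw
        omega
      rw [unit_list_eq w, hlen]; rfl
    · rintro rfl
      simp [M14, Fin.ext_iff]

lemma G14_Fn : G14.Fn () := ⟨[(), ()], rfl⟩

/-- The regular dominant strategy: call only on the very first symbol. -/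
noncomputable def sig0 : JStrat Unit := fun α _ =>
  letI := Classical.propDecidable (α = [])
  if α = [] then JMove.call else JMove.read

lemma sig0_nil : sig0 [] () = JMove.call := by simp [sig0]

lemma sig0_ne {α : List (HSym Unit)} (h : α ≠ []) (a : Unit) : sig0 α a = JMove.read := by
  simp [sig0, h]

/-- The unique valid Romeo strategy. -/
def tau0 : RStrat Unit := fun _ _ => [(), ()]

lemma tau0_valid : G14.RValid tau0 := by intro α a _; rfl

lemma step_empty (σ : JStrat Unit) (τ : RStrat Unit) (α : List (HSym Unit)) (d : ℕ) :
    G14.step σ τ (α, [], d) = (α, [], d) := rfl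

lemma step_call (σ : JStrat Unit) (τ : RStrat Unit) (α : List (HSym Unit))
    (a : Unit) (k d : ℕ) (v : List (Unit × ℕ)) (h : σ α a = JMove.call) :
    G14.step σ τ (α, (a, k) :: v, d) =
      (α ++ [Sum.inr a], (τ α a).map (fun b => (b, k + 1)) ++ v, max d (k + 1)) := by
  letI := Classical.propDecidable (G14.Fn a ∧ σ α a = JMove.call)
  show (if G14.Fn a ∧ σ α a = JMove.call then _ else _) = _
  rw [if_pos ⟨G14_Fn, h⟩]

lemma step_read (σ : JStrat Unit) (τ : RStrat Unit) (α : List (HSym Unit))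
    (a : Unit) (k d : ℕ) (v : List (Unit × ℕ)) (h : σ α a ≠ JMove.call) :
    G14.step σ τ (α, (a, k) :: v, d) = (α ++ [Sum.inl a], v, d) := by
  letI := Classical.propDecidable (G14.Fn a ∧ σ α a = JMove.call)
  show (if G14.Fn a ∧ σ α a = JMove.call then _ else _) = _
  rw [if_neg (fun hc => h hc.2)]

lemma read_phase (τ : RStrat Unit) (v : List (Unit × ℕ)) :
    ∀ (α : List (HSym Unit)) (d : ℕ), α ≠ [] →
      (G14.step sig0 τ)^[v.length] (α, v, d) = (α ++ v.map (fun p => Sum.inl p.1), [], d) := by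
  induction v with
  | nil => intro α d _; simp
  | cons p v ih =>
    intro α d hα
    obtain ⟨a, k⟩ := p
    rw [List.length_cons, Function.iterate_succ_apply,
      step_read sig0 τ α a k d v (by rw [sig0_ne hα]; simp),
      ih (α ++ [Sum.inl a]) d (by simp)]
    simp

lemma flat_inl (l : List (Unit × ℕ)) :
    flat (l.map (fun p => Sum.inl p.1)) = l.map Prod.fst := by
  induction l with
  | nil => rfl
  | cons p l ih => simp [flat] at ih ⊢ <;> exact ih

lemma flat_replicate_inr (m : ℕ) : flat (List.replicate m (Sum.inr () : HSym Unit)) = [] := by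
  induction m with
  | zero => rfl
  | succ m ih => simp only [List.replicate, flat, List.filterMap_cons]; exact ih

lemma sig0_wins (w : List Unit) (hw : w ≠ []) : G14.WinsOn sig0 w := by
  intro τ hτ
  obtain ⟨a, v, rfl⟩ := List.exists_cons_of_ne_nil hw
  have hτa : τ [] a = [(), ()] := hτ [] a G14_Fn
  set v1 : List (Unit × ℕ) := (τ [] a).map (fun b => (b, 1)) ++ v.map (fun b => (b, 0)) with hv1
  refine ⟨v1.length + 1, ?_⟩
  have hplay : G14.play sig0 τ (a :: v) (v1.length + 1) =
      ([Sum.inr a] ++ v1.map (fun p => Sum.inl p.1), [], 1) := by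
    show (G14.step sig0 τ)^[v1.length + 1] ([], ((a,0) :: v.map (fun b => (b,0))), 0) = _
    rw [Function.iterate_succ_apply,
      step_call sig0 τ [] a 0 0 (v.map (fun b => (b, 0))) sig0_nil]
    simpa using read_phase τ v1 [Sum.inr a] 1 (by simp)
  rw [hplay]
  refine ⟨rfl, ?_⟩
  have hflat : flat ([Sum.inr a] ++ v1.map (fun p => Sum.inl p.1)) = v1.map Prod.fst := by
    rw [show flat ([Sum.inr a] ++ v1.map (fun p => Sum.inl p.1)) =
      flat (v1.map (fun p => Sum.inl p.1)) from rfl]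
    exact flat_inl v1
  show T14.evalFrom T14.start _ ∈ T14.accept
  rw [hflat, T14_evalFrom]
  have hlen : v1.length ≥ 2 := by simp [hv1, hτa]
  have : min (v1.map Prod.fst).length 2 = 2 := by simp; omega
  simpa [T14, Fin.ext_iff] using this

lemma no_win_nil (σ : JStrat Unit) : ¬ G14.WinsOn σ [] := by
  intro h
  obtain ⟨n, _, hacc⟩ := h tau0 tau0_valid
  have hplay : G14.play σ tau0 [] n = ([], [], 0) := by
    show (G14.step σ tau0)^[n] ([], [], 0) = _
    exact Function.iterate_fixed (step_empty σ tau0 [] 0) n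
  rw [hplay] at hacc
  have : T14.evalFrom T14.start (flat ([] : List (HSym Unit))) ∈ T14.accept := hacc
  rw [show flat ([] : List (HSym Unit)) = [] from rfl, T14_evalFrom] at this
  simp [T14, Fin.ext_iff] at this

lemma sig0_dominant : G14.Dominant sig0 := by
  intro σ' w hw
  by_cases h : w = []
  · exact absurd (h ▸ hw) (no_win_nil σ')
  · exact sig0_wins w h

/-- DFA over the extended alphabet recognizing {inl ()}. -/
def M3 : DFA (HSym Unit) (Fin 3) :=
  ⟨fun q x => if q = 0 then (match x with | Sum.inl _ => 1 | Sum.inr _ => 2) else 2, 0, {1}⟩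

lemma M3_dead (rest : List (HSym Unit)) : List.foldl M3.step 2 rest = 2 := by
  induction rest with
  | nil => rfl
  | cons x rest ih => simpa [M3] using ih

lemma M3_accepts (x : List (HSym Unit)) :
    (M3.evalFrom M3.start x ∈ M3.accept) ↔ x = [Sum.inl ()] := by
  cases x with
  | nil => simp [M3, DFA.evalFrom]
  | cons y ys =>
    show List.foldl M3.step (M3.step 0 y) ys ∈ _ ↔ _
    cases y with
    | inl u =>
      cases ys with
      | nil => simp [M3]
      | cons z zs =>
        rw [show M3.step 0 (Sum.inl u) = 1 from rfl, List.foldl_cons,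
          show M3.step 1 z = 2 from by simp [M3], M3_dead]
        simp [M3]
    | inr u =>
      rw [show M3.step 0 (Sum.inr u) = 2 from rfl, M3_dead]
      simp [M3]

lemma sig0_regular : G14.RegularStrat sig0 := by
  refine ⟨Fin 3, inferInstance, M3, ?_⟩
  ext x
  show (M3.evalFrom M3.start x ∈ M3.accept) ↔ _
  rw [M3_accepts]
  constructor
  · rintro rfl
    exact ⟨[], (), G14_Fn, sig0_nil, rfl⟩
  · rintro ⟨α, a, _, hc, rfl⟩
    have hα : α = [] := by
      by_contra hne
      rw [sig0_ne hne] at hc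
      exact JMove.noConfusion hc
    subst hα; rfl

lemma no_forgetful_dominant :
    ¬ ∃ σ : JStrat Unit, G14.Forgetful σ ∧ G14.Dominant σ := by
  rintro ⟨σ, hf, hd⟩
  have hwin : G14.WinsOn σ [()] := hd sig0 (sig0_wins [()] (by simp))
  obtain ⟨n, hrem, hacc⟩ := hwin tau0 tau0_valid
  cases hcall : σ [] () with
  | read =>
    have hn : n ≠ 0 := by
      intro h; subst h
      exact List.cons_ne_nil _ _ hrem
    obtain ⟨m, rfl⟩ := Nat.exists_eq_succ_of_ne_zero hn
    have hplay : G14.play σ tau0 [()] (m + 1) = ([Sum.inl ()], [], 0) := by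
      show (G14.step σ tau0)^[m + 1] ([], [((), 0)], 0) = _
      rw [Function.iterate_succ_apply,
        step_read σ tau0 [] () 0 0 [] (by rw [hcall]; simp)]
      exact Function.iterate_fixed (step_empty σ tau0 [Sum.inl ()] 0) m
    rw [hplay] at hacc
    have : T14.evalFrom T14.start (flat [Sum.inl ()]) ∈ T14.accept := hacc
    rw [show flat [Sum.inl ()] = [()] from rfl, T14_evalFrom] at this
    simp [T14, Fin.ext_iff] at this
  | call =>
    have hcallall : ∀ m : ℕ, σ (List.replicate m (Sum.inr ())) () = JMove.call := by
      intro m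
      rw [hf (List.replicate m (Sum.inr ())) [] () G14_Fn (by rw [flat_replicate_inr]; rfl)]
      exact hcall
    have key : ∀ m : ℕ, ∃ v : List (Unit × ℕ),
        G14.play σ tau0 [()] m = (List.replicate m (Sum.inr ()), ((), m) :: v, m) := by
      intro m
      induction m with
      | zero => exact ⟨[], rfl⟩
      | succ m ih =>
        obtain ⟨v, hv⟩ := ih
        refine ⟨((), m + 1) :: v, ?_⟩
        show (G14.step σ tau0)^[m + 1] ([], [((), 0)], 0) = _
        rw [Function.iterate_succ_apply']
        show G14.step σ tau0 (G14.play σ tau0 [()] m) = _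
        rw [hv, step_call σ tau0 _ () m m v (hcallall m)]
        rw [← List.replicate_succ' ]
        simp [tau0, Nat.max_eq_right (Nat.le_succ m)]
    obtain ⟨v, hv⟩ := key n
    rw [hv] at hrem
    exact List.cons_ne_nil _ _ hrem

end Ex14

theorem statement14 : ∃ (A : Type) (_ : Fintype A) (G : CFGame A),
    (∃ σ : JStrat A, G.RegularStrat σ ∧ G.Dominant σ) ∧
    ¬ ∃ σ : JStrat A, G.Forgetful σ ∧ G.Dominant σ := by
  refine ⟨Unit, inferInstance, G14, ⟨sig0, sig0_regular, sig0_dominant⟩, no_forgetful_dominant⟩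

end CFG
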